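/- Let m ≥ 0 be an integer and ν > 1/2. For every x > 0, x^{ν+m}K_ν(x) ≤ (m² + (2ν−1)m)^{m/2} · 2^{ν−1}Γ(ν), where for m = 0 the first factor is interpreted as 1. (This is Lemma 2.3(v) of the paper, with the constant normalized so that it matches the small-argument limit lim_{x→0⁺} x^ν K_ν(x) = 2^{ν−1}Γ(ν).) -/

import Mathlib

open MeasureTheory

/-- The modified Bessel function of the second kind, via the integral representation
`K_ν(x) = (Γ(ν+1/2)(2x)^ν/√π) ∫₀^∞ cos(y)/(y²+x²)^{ν+1/2} dy`, valid for `ν > −1/2`, `x > 0`. -/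
noncomputable def besselK (ν x : ℝ) : ℝ :=
  (Real.Gamma (ν + 1 / 2) * (2 * x) ^ ν / Real.sqrt Real.pi) *
    ∫ y in Set.Ioi (0 : ℝ), Real.cos y / (y ^ 2 + x ^ 2) ^ (ν + 1 / 2)

open Real Set

lemma integral_cos_exp_neg_mul_sq {c : ℝ} (hc : 0 < c) :
    ∫ y : ℝ, Real.cos y * Real.exp (-c * y ^ 2)
      = (π / c) ^ (1/2 : ℝ) * Real.exp (-(1/(4*c))) := by
  have h := fourierIntegral_gaussian (b := (c:ℂ)) (by simpa using hc) 1
  have hint : Integrable (fun x : ℝ =>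
      Complex.exp (Complex.I * 1 * x) * Complex.exp (-(c:ℂ) * x ^ 2)) := by
    refine Integrable.mono' (g := fun x : ℝ => Real.exp (-c * x ^ 2))
        (integrable_exp_neg_mul_sq hc) (Continuous.aestronglyMeasurable (by fun_prop))
        (Filter.Eventually.of_forall fun x => ?_)
    rw [norm_mul, Complex.norm_exp, Complex.norm_exp]
    have h1 : (Complex.I * 1 * x).re = 0 := by simp
    have h2 : ((-(c:ℂ)) * (x:ℂ) ^ 2).re = -c * x ^ 2 := by
      rw [show (-(c:ℂ)) * (x:ℂ) ^ 2 = ((-c * x ^ 2 : ℝ) : ℂ) by push_cast; ring,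
        Complex.ofReal_re]
    rw [h1, h2, Real.exp_zero, one_mul]
  have hre := integral_re hint
  have hL : ∀ x : ℝ, (Complex.exp (Complex.I * 1 * x) * Complex.exp (-(c:ℂ) * x ^ 2)).re
      = Real.cos x * Real.exp (-c * x ^ 2) := by
    intro x
    have e1 : -(c:ℂ) * (x:ℂ) ^ 2 = ((-c * x ^ 2 : ℝ) : ℂ) := by push_cast; ring
    have e2 : Complex.I * 1 * (x:ℂ) = (x:ℂ) * Complex.I := by ring
    rw [e1, e2, ← Complex.ofReal_exp]
    simp only [Complex.mul_re, Complex.ofReal_re, Complex.ofReal_im, mul_zero, sub_zero,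
      Complex.exp_ofReal_mul_I_re]
  have hR : ((Real.pi : ℂ) / (c:ℂ)) ^ (1/2 : ℂ) * Complex.exp (-(1:ℂ) ^ 2 / (4 * (c:ℂ)))
      = (((π / c) ^ (1/2 : ℝ) * Real.exp (-(1/(4*c))) : ℝ) : ℂ) := by
    have h1 : ((Real.pi : ℂ) / (c:ℂ)) = ((π / c : ℝ) : ℂ) := by push_cast; ring
    have h2 : (-(1:ℂ) ^ 2 / (4 * (c:ℂ))) = ((-(1/(4*c)) : ℝ) : ℂ) := by
      push_cast; field_simp
    rw [h1, h2, ← Complex.ofReal_exp, show (1/2:ℂ) = ((1/2:ℝ):ℂ) by norm_num,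
      ← Complex.ofReal_cpow (by positivity), ← Complex.ofReal_mul]
  rw [h, hR] at hre
  simp only [RCLike.re_to_complex, Complex.ofReal_re, hL] at hre
  exact hre

lemma integrable_cos_exp_neg_mul_sq {c : ℝ} (hc : 0 < c) :
    Integrable (fun y : ℝ => Real.cos y * Real.exp (-c * y ^ 2)) := by
  refine Integrable.mono' (integrable_exp_neg_mul_sq hc)
    (Continuous.aestronglyMeasurable (by fun_prop))
    (Filter.Eventually.of_forall fun y => ?_)
  rw [norm_mul, Real.norm_eq_abs, Real.norm_eq_abs, Real.abs_exp]
  exact mul_le_of_le_one_left (Real.exp_pos _).le (Real.abs_cos_le_one y)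

lemma integral_Ioi_cos_exp_neg_mul_sq {c : ℝ} (hc : 0 < c) :
    ∫ y in Ioi (0:ℝ), Real.cos y * Real.exp (-c * y ^ 2)
      = (π / c) ^ (1/2 : ℝ) * Real.exp (-(1/(4*c))) / 2 := by
  have hfull := integral_cos_exp_neg_mul_sq hc
  have hint := integrable_cos_exp_neg_mul_sq hc
  have hsplit := integral_add_compl (measurableSet_Ioi (a := (0:ℝ))) hint
  rw [compl_Ioi] at hsplit
  have heven : ∫ y in Iic (0:ℝ), Real.cos y * Real.exp (-c * y ^ 2)
      = ∫ y in Ioi (0:ℝ), Real.cos y * Real.exp (-c * y ^ 2) := by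
    rw [show Iic (0:ℝ) = Iic (-0) by norm_num,
      ← integral_comp_neg_Ioi (0:ℝ) (fun y => Real.cos y * Real.exp (-c * y ^ 2))]
    refine setIntegral_congr_fun measurableSet_Ioi fun y _ => ?_
    simp [Real.cos_neg, neg_sq]
  rw [heven, ← two_mul] at hsplit
  rw [← hfull, ← hsplit]
  ring

lemma integral_rpow_mul_exp_neg_mul {s c : ℝ} (hs : 0 < s) (hc : 0 < c) :
    ∫ t in Ioi (0:ℝ), t ^ (s - 1) * Real.exp (-c * t) = c ^ (-s) * Real.Gamma s := by
  have h := integral_rpow_mul_exp_neg_mul_rpow (p := 1) (q := s - 1) (b := c)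
    one_pos (by linarith) hc
  simp only [Real.rpow_one] at h
  rw [h]
  norm_num

lemma integrableOn_rpow_mul_exp_neg_mul {s c : ℝ} (hs : 0 < s) (hc : 0 < c) :
    IntegrableOn (fun t : ℝ => t ^ (s - 1) * Real.exp (-c * t)) (Ioi 0) := by
  have h := integrableOn_rpow_mul_exp_neg_mul_rpow (p := 1) (s := s - 1) (b := c)
    (by linarith) one_pos hc
  simpa only [Real.rpow_one] using h

lemma integrableOn_base_rpow {s x : ℝ} (hs : 1/2 < s) (hx : 0 < x) :
    IntegrableOn (fun y : ℝ => (y ^ 2 + x ^ 2) ^ (-s)) (Ioi 0) := by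
  have hcont : Continuous fun y : ℝ => (y ^ 2 + x ^ 2) ^ (-s) := by
    apply Continuous.rpow_const (by fun_prop)
    intro y; left; positivity
  rw [show Ioi (0:ℝ) = Ioc 0 1 ∪ Ioi 1 from (Ioc_union_Ioi_eq_Ioi zero_le_one).symm]
  refine IntegrableOn.union ?_ ?_
  · exact hcont.integrableOn_Ioc
  · refine Integrable.mono' (g := fun y : ℝ => y ^ (-(2*s)))
      (integrableOn_Ioi_rpow_of_lt (by linarith) one_pos)
      (hcont.aestronglyMeasurable.restrict)
      ((ae_restrict_mem measurableSet_Ioi).mono fun y hy => ?_)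
    have hy1 : (1:ℝ) < y := hy
    have hy0 : (0:ℝ) < y := by linarith
    rw [Real.norm_eq_abs, abs_of_nonneg (Real.rpow_nonneg (by positivity) _)]
    have h1 : (y ^ 2 : ℝ) ^ (-s) = y ^ (-(2*s)) := by
      rw [← Real.rpow_natCast y 2, ← Real.rpow_mul hy0.le]
      norm_num
    show (y ^ 2 + x ^ 2) ^ (-s) ≤ y ^ (-(2*s))
    rw [← h1]
    apply Real.rpow_le_rpow_of_nonpos (by positivity) (by nlinarith) (by linarith)

lemma key_swap {s x : ℝ} (hs : 1 < s) (hx : 0 < x) :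
    ∫ y in Ioi (0:ℝ), Real.cos y * (y ^ 2 + x ^ 2) ^ (-s)
      = (1 / Real.Gamma s) * ∫ t in Ioi (0:ℝ),
          (t ^ (s-1) * Real.exp (-(x^2) * t)) * ((π/t) ^ (1/2:ℝ) * Real.exp (-(1/(4*t))) / 2) := by
  have hs0 : 0 < s := by linarith
  have hΓ : 0 < Real.Gamma s := Real.Gamma_pos_of_pos hs0
  set F : ℝ → ℝ → ℝ := fun y t => Real.cos y * (t ^ (s-1) * Real.exp (-(y^2+x^2) * t)) with hF
  have hc : ∀ y : ℝ, 0 < y ^ 2 + x ^ 2 := fun y => by positivity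
  have hmeas : AEStronglyMeasurable (Function.uncurry F)
      ((volume.restrict (Ioi 0)).prod (volume.restrict (Ioi 0))) := by
    apply Continuous.aestronglyMeasurable
    apply (Real.continuous_cos.comp continuous_fst).mul
    apply (continuous_snd.rpow_const fun p => Or.inr (by linarith)).mul
    exact ((((continuous_fst.pow 2).add continuous_const).neg.mul continuous_snd).rexp)
  have hslice : ∀ y : ℝ, Integrable (fun t => F y t) (volume.restrict (Ioi 0)) :=
    fun y => (integrableOn_rpow_mul_exp_neg_mul hs0 (hc y)).const_mul _
  have hnorm : ∀ y : ℝ, ∫ t in Ioi (0:ℝ), ‖F y t‖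
      = |Real.cos y| * ((y ^ 2 + x ^ 2) ^ (-s) * Real.Gamma s) := by
    intro y
    have : ∫ t in Ioi (0:ℝ), ‖F y t‖
        = ∫ t in Ioi (0:ℝ), |Real.cos y| * (t ^ (s-1) * Real.exp (-(y^2+x^2) * t)) := by
      refine setIntegral_congr_fun measurableSet_Ioi fun t ht => ?_
      rw [hF]
      simp only [Real.norm_eq_abs, abs_mul, Real.abs_exp,
        abs_of_nonneg (Real.rpow_nonneg (le_of_lt ht) _)]
    rw [this, integral_const_mul, integral_rpow_mul_exp_neg_mul hs0 (hc y)]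
  have hnormint : Integrable (fun y => ∫ t in Ioi (0:ℝ), ‖F y t‖)
      (volume.restrict (Ioi 0)) := by
    refine Integrable.mono'
      (g := fun y => Real.Gamma s * (y ^ 2 + x ^ 2) ^ (-s))
      ((integrableOn_base_rpow (by linarith) hx).const_mul _) ?_
      (Filter.Eventually.of_forall fun y => ?_)
    · simp only [hnorm]
      apply Continuous.aestronglyMeasurable
      refine (Real.continuous_cos.abs).mul (Continuous.mul ?_ continuous_const)
      exact Continuous.rpow_const (by fun_prop) fun y => Or.inl (by positivity)
    · rw [hnorm, Real.norm_eq_abs,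
        abs_of_nonneg (by positivity : (0:ℝ) ≤ |Real.cos y| * ((y ^ 2 + x ^ 2) ^ (-s) * Real.Gamma s))]
      calc |Real.cos y| * ((y ^ 2 + x ^ 2) ^ (-s) * Real.Gamma s)
          ≤ 1 * ((y ^ 2 + x ^ 2) ^ (-s) * Real.Gamma s) := by
            apply mul_le_mul_of_nonneg_right (Real.abs_cos_le_one y) (by positivity)
        _ = Real.Gamma s * (y ^ 2 + x ^ 2) ^ (-s) := by ring
  have hFint : Integrable (Function.uncurry F)
      ((volume.restrict (Ioi 0)).prod (volume.restrict (Ioi 0))) :=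
    (integrable_prod_iff hmeas).mpr
      ⟨Filter.Eventually.of_forall hslice, hnormint⟩
  have step1 : ∀ y : ℝ, Real.cos y * (y ^ 2 + x ^ 2) ^ (-s)
      = (1 / Real.Gamma s) * ∫ t in Ioi (0:ℝ), F y t := by
    intro y
    rw [hF]
    simp only []
    rw [integral_const_mul, integral_rpow_mul_exp_neg_mul hs0 (hc y)]
    field_simp
  have step4 : ∀ t ∈ Ioi (0:ℝ), ∫ y in Ioi (0:ℝ), F y t
      = (t ^ (s-1) * Real.exp (-(x^2) * t)) * ((π/t) ^ (1/2:ℝ) * Real.exp (-(1/(4*t))) / 2) := by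
    intro t ht
    have ht' : (0:ℝ) < t := ht
    have : ∀ y : ℝ, F y t
        = (t ^ (s-1) * Real.exp (-(x^2) * t)) * (Real.cos y * Real.exp (-t * y ^ 2)) := by
      intro y
      rw [hF]
      show Real.cos y * (t ^ (s-1) * Real.exp (-(y^2+x^2) * t)) = _
      rw [show -(y^2+x^2)*t = -(x^2)*t + (-t*y^2) by ring, Real.exp_add]
      ring
    rw [integral_congr_ae (Filter.Eventually.of_forall this), integral_const_mul,
      integral_Ioi_cos_exp_neg_mul_sq ht']
  calc ∫ y in Ioi (0:ℝ), Real.cos y * (y ^ 2 + x ^ 2) ^ (-s)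
      = ∫ y in Ioi (0:ℝ), (1 / Real.Gamma s) * ∫ t in Ioi (0:ℝ), F y t :=
        integral_congr_ae (Filter.Eventually.of_forall fun y => step1 y)
    _ = (1 / Real.Gamma s) * ∫ y in Ioi (0:ℝ), ∫ t in Ioi (0:ℝ), F y t := integral_const_mul _ _
    _ = (1 / Real.Gamma s) * ∫ t in Ioi (0:ℝ), ∫ y in Ioi (0:ℝ), F y t := by
        rw [integral_integral_swap hFint]
    _ = _ := by rw [setIntegral_congr_fun measurableSet_Ioi step4]

lemma besselK_repr {ν x : ℝ} (hν : 1/2 < ν) (hx : 0 < x) :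
    besselK ν x = 2 ^ (ν-1) * x ^ ν *
      ∫ t in Ioi (0:ℝ), t ^ (ν-1) * Real.exp (-(x^2*t) - 1/(4*t)) := by
  have hs : 1 < ν + 1/2 := by linarith
  have hΓ : 0 < Real.Gamma (ν + 1/2) := Real.Gamma_pos_of_pos (by linarith)
  have hsqrtπ : (0:ℝ) < Real.sqrt π := Real.sqrt_pos.mpr pi_pos
  rw [besselK]
  have h1 : ∫ y in Ioi (0:ℝ), Real.cos y / (y ^ 2 + x ^ 2) ^ (ν + 1/2)
      = ∫ y in Ioi (0:ℝ), Real.cos y * (y ^ 2 + x ^ 2) ^ (-(ν + 1/2)) := by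
    refine setIntegral_congr_fun measurableSet_Ioi fun y _ => ?_
    rw [Real.rpow_neg (by positivity), div_eq_mul_inv]
  have h2 : ∫ t in Ioi (0:ℝ),
        (t ^ (ν + 1/2 - 1) * Real.exp (-(x^2) * t)) *
          ((π/t) ^ (1/2:ℝ) * Real.exp (-(1/(4*t))) / 2)
      = (Real.sqrt π / 2) * ∫ t in Ioi (0:ℝ), t ^ (ν-1) * Real.exp (-(x^2*t) - 1/(4*t)) := by
    rw [← integral_const_mul]
    refine setIntegral_congr_fun measurableSet_Ioi fun t ht => ?_
    have ht' : (0:ℝ) < t := ht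
    have e1 : (π/t) ^ (1/2:ℝ) = Real.sqrt π / t ^ (1/2:ℝ) := by
      rw [Real.div_rpow pi_pos.le ht'.le, Real.sqrt_eq_rpow]
    have e2 : t ^ (ν + 1/2 - 1) / t ^ (1/2:ℝ) = t ^ (ν - 1) := by
      rw [← Real.rpow_sub ht']
      ring_nf
    have e3 : Real.exp (-(x^2) * t) * Real.exp (-(1/(4*t)))
        = Real.exp (-(x^2*t) - 1/(4*t)) := by
      rw [← Real.exp_add]; ring_nf
    calc (t ^ (ν + 1/2 - 1) * Real.exp (-(x^2) * t)) *
          ((π/t) ^ (1/2:ℝ) * Real.exp (-(1/(4*t))) / 2)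
        = Real.sqrt π / 2 * ((t ^ (ν + 1/2 - 1) / t ^ (1/2:ℝ)) *
            (Real.exp (-(x^2) * t) * Real.exp (-(1/(4*t))))) := by rw [e1]; ring
      _ = Real.sqrt π / 2 * (t ^ (ν-1) * Real.exp (-(x^2*t) - 1/(4*t))) := by rw [e2, e3]
  rw [h1, key_swap hs hx, h2]
  have h3 : (2*x) ^ ν = 2 ^ ν * x ^ ν := Real.mul_rpow (by norm_num) hx.le
  have h4 : (2:ℝ) ^ (ν - 1) = 2 ^ ν / 2 := by
    rw [Real.rpow_sub (by norm_num), Real.rpow_one]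
  rw [h3, h4]
  field_simp
  ring

lemma weighted_repr {ν x : ℝ} (m : ℕ) (hν : 1/2 < ν) (hx : 0 < x) :
    x ^ (ν + (m:ℝ)) * besselK ν x
      = 2 ^ (ν-1) * ∫ u in Ioi (0:ℝ),
          u ^ (ν-1) * Real.exp (-u) * (x ^ (m:ℝ) * Real.exp (-(x^2/(4*u)))) := by
  have hx2 : (0:ℝ) < x ^ 2 := by positivity
  set g : ℝ → ℝ := fun u => u ^ (ν-1) * Real.exp (-u - x^2/(4*u)) with hg
  have hsub : ∀ t ∈ Ioi (0:ℝ), t ^ (ν-1) * Real.exp (-(x^2*t) - 1/(4*t))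
      = (x^2) ^ (1-ν) * g (x^2 * t) := by
    intro t ht
    have ht' : (0:ℝ) < t := ht
    rw [hg]
    show _ = (x^2) ^ (1-ν) * ((x^2*t) ^ (ν-1) * Real.exp (-(x^2*t) - x^2/(4*(x^2*t))))
    rw [Real.mul_rpow hx2.le ht'.le]
    have e1 : (x^2) ^ (1-ν) * ((x^2) ^ (ν-1) * t ^ (ν-1)) = t ^ (ν-1) := by
      rw [← mul_assoc, ← Real.rpow_add hx2]
      norm_num
    have e2 : x^2/(4*(x^2*t)) = 1/(4*t) := by
      field_simp
    rw [e2]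
    calc t ^ (ν-1) * Real.exp (-(x^2*t) - 1/(4*t))
        = ((x^2) ^ (1-ν) * ((x^2) ^ (ν-1) * t ^ (ν-1))) * Real.exp (-(x^2*t) - 1/(4*t)) := by
          rw [e1]
      _ = _ := by ring
  have hJ : ∫ t in Ioi (0:ℝ), t ^ (ν-1) * Real.exp (-(x^2*t) - 1/(4*t))
      = (x^2) ^ (1-ν) * ((x^2)⁻¹ * ∫ u in Ioi (0:ℝ), g u) := by
    rw [setIntegral_congr_fun measurableSet_Ioi hsub, integral_const_mul]
    have := integral_comp_mul_left_Ioi g 0 hx2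
    rw [mul_zero] at this
    rw [this, smul_eq_mul]
  rw [besselK_repr hν hx, hJ]
  -- power bookkeeping
  have e3 : (x^2 : ℝ) ^ (1-ν) = x ^ (2*(1-ν)) := by
    rw [← Real.rpow_natCast x 2, ← Real.rpow_mul hx.le]
    norm_num
  have e4 : ((x^2 : ℝ))⁻¹ = x ^ (-2:ℝ) := by
    have h2 : x ^ (2:ℝ) = x ^ 2 := by
      rw [show (2:ℝ) = ((2:ℕ):ℝ) by norm_num, Real.rpow_natCast]
    rw [← h2, ← Real.rpow_neg hx.le]
  have e5 : x ^ (ν + (m:ℝ)) * (x ^ ν * (x ^ (2*(1-ν)) * x ^ (-2:ℝ))) = x ^ (m:ℝ) := by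
    rw [← Real.rpow_add hx, ← Real.rpow_add hx, ← Real.rpow_add hx]
    congr 1
    ring
  calc x ^ (ν + (m:ℝ)) * (2 ^ (ν-1) * x ^ ν * ((x^2) ^ (1-ν) * ((x^2)⁻¹ * ∫ u in Ioi (0:ℝ), g u)))
      = (x ^ (ν + (m:ℝ)) * (x ^ ν * (x ^ (2*(1-ν)) * x ^ (-2:ℝ)))) * (2 ^ (ν-1) * ∫ u in Ioi (0:ℝ), g u) := by
        rw [e3, e4]; ring
    _ = 2 ^ (ν-1) * (x ^ (m:ℝ) * ∫ u in Ioi (0:ℝ), g u) := by rw [e5]; ring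
    _ = 2 ^ (ν-1) * ∫ u in Ioi (0:ℝ), x ^ (m:ℝ) * g u := by rw [integral_const_mul]
    _ = _ := by
        congr 1
        refine setIntegral_congr_fun measurableSet_Ioi fun u hu => ?_
        rw [hg]
        show x ^ (m:ℝ) * (u ^ (ν-1) * Real.exp (-u - x^2/(4*u))) = _
        rw [show -u - x^2/(4*u) = -u + -(x^2/(4*u)) by ring, Real.exp_add]
        ring

lemma pointwise_bound {x u : ℝ} (m : ℕ) (hx : 0 < x) (hu : 0 < u) :
    x ^ (m:ℝ) * Real.exp (-(x^2/(4*u))) ≤ (2*(m:ℝ)) ^ ((m:ℝ)/2) * u ^ ((m:ℝ)/2) := by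
  rcases Nat.eq_zero_or_pos m with hm | hm
  · subst hm
    simp only [Nat.cast_zero, Real.rpow_zero, mul_zero, zero_div, one_mul, mul_one]
    rw [Real.exp_le_one_iff]
    have : (0:ℝ) ≤ x^2/(4*u) := by positivity
    linarith
  · have hp : (1:ℝ) ≤ (m:ℝ) := by exact_mod_cast hm
    have hp0 : (0:ℝ) < (m:ℝ) := by linarith
    set p := (m:ℝ)
    have hd : (0:ℝ) < 2*p*u := by positivity
    set z := x^2/(2*p*u) with hz
    have hz0 : 0 < z := by positivity
    have h1 : z ≤ Real.exp z := le_trans (by linarith) (by linarith [Real.add_one_le_exp z])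
    have h2 : z ^ (p/2) ≤ (Real.exp z) ^ (p/2) :=
      Real.rpow_le_rpow hz0.le h1 (by positivity)
    have h3 : (Real.exp z) ^ (p/2) = Real.exp (x^2/(4*u)) := by
      rw [← Real.exp_mul]
      congr 1
      rw [hz]
      field_simp
      ring
    have h4 : z ^ (p/2) = x ^ p / (2*p*u) ^ (p/2) := by
      rw [hz, Real.div_rpow (by positivity) hd.le]
      congr 1
      rw [← Real.rpow_natCast x 2, ← Real.rpow_mul hx.le,
        show ((2:ℕ):ℝ) * (p/2) = p by push_cast; ring]
    have h5 : x ^ p ≤ (2*p*u) ^ (p/2) * Real.exp (x^2/(4*u)) := by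
      rw [h4, h3] at h2
      calc x ^ p = (x ^ p / (2*p*u) ^ (p/2)) * (2*p*u) ^ (p/2) := by
            field_simp
        _ ≤ Real.exp (x^2/(4*u)) * (2*p*u) ^ (p/2) :=
            mul_le_mul_of_nonneg_right h2 (by positivity)
        _ = (2*p*u) ^ (p/2) * Real.exp (x^2/(4*u)) := by ring
    have h6 : (2*p*u) ^ (p/2) = (2*p) ^ (p/2) * u ^ (p/2) := by
      rw [Real.mul_rpow (by positivity) hu.le]
    calc x ^ p * Real.exp (-(x^2/(4*u)))
        ≤ ((2*p*u) ^ (p/2) * Real.exp (x^2/(4*u))) * Real.exp (-(x^2/(4*u))) :=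
          mul_le_mul_of_nonneg_right h5 (Real.exp_pos _).le
      _ = (2*p*u) ^ (p/2) := by
          rw [mul_assoc, ← Real.exp_add]
          simp
      _ = (2*p) ^ (p/2) * u ^ (p/2) := h6

lemma Gamma_add_half_le {a : ℝ} (ha : 0 < a) :
    Real.Gamma (a + 1/2) ≤ Real.Gamma a * a ^ (1/2:ℝ) := by
  have hΓa : 0 < Real.Gamma a := Real.Gamma_pos_of_pos ha
  have h := Real.convexOn_log_Gamma.2 (mem_Ioi.mpr ha)
    (mem_Ioi.mpr (by linarith : (0:ℝ) < a + 1))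
    (by norm_num : (0:ℝ) ≤ 1/2) (by norm_num : (0:ℝ) ≤ 1/2) (by norm_num)
  simp only [smul_eq_mul, Function.comp_apply] at h
  rw [show (1/2:ℝ) * a + 1/2 * (a+1) = a + 1/2 by ring] at h
  rw [Real.Gamma_add_one ha.ne', Real.log_mul ha.ne' hΓa.ne'] at h
  have h' : Real.log (Real.Gamma (a + 1/2)) ≤ Real.log (Real.Gamma a) + 1/2 * Real.log a := by
    linarith
  calc Real.Gamma (a + 1/2) = Real.exp (Real.log (Real.Gamma (a + 1/2))) :=
        (Real.exp_log (Real.Gamma_pos_of_pos (by linarith))).symm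
    _ ≤ Real.exp (Real.log (Real.Gamma a) + 1/2 * Real.log a) := Real.exp_le_exp.mpr h'
    _ = Real.Gamma a * a ^ (1/2:ℝ) := by
        rw [Real.exp_add, Real.exp_log hΓa, Real.rpow_def_of_pos ha]
        ring_nf

lemma Gamma_le_bound {ν : ℝ} (hν : 1/2 < ν) :
    ∀ k : ℕ, Real.Gamma (ν + (k:ℝ)/2) ≤ Real.Gamma ν * ((2*ν + (k:ℝ) - 1)/2) ^ ((k:ℝ)/2) := by
  intro k
  induction k with
  | zero => simp
  | succ k ih =>
    have hb : (0:ℝ) < ν + (k:ℝ)/2 := by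
      have : (0:ℝ) ≤ (k:ℝ) := Nat.cast_nonneg k
      linarith
    have hΓν : 0 < Real.Gamma ν := Real.Gamma_pos_of_pos (by linarith)
    have hbase0 : (0:ℝ) ≤ (2*ν + (k:ℝ) - 1)/2 := by
      have : (0:ℝ) ≤ (k:ℝ) := Nat.cast_nonneg k
      linarith
    have hbase1 : (2*ν + (k:ℝ) - 1)/2 ≤ (2*ν + (k:ℝ))/2 := by linarith
    calc Real.Gamma (ν + ((k:ℕ)+1:ℕ)/2)
        = Real.Gamma ((ν + (k:ℝ)/2) + 1/2) := by push_cast; ring_nf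
      _ ≤ Real.Gamma (ν + (k:ℝ)/2) * (ν + (k:ℝ)/2) ^ (1/2:ℝ) := Gamma_add_half_le hb
      _ ≤ (Real.Gamma ν * ((2*ν + (k:ℝ) - 1)/2) ^ ((k:ℝ)/2)) * (ν + (k:ℝ)/2) ^ (1/2:ℝ) :=
          mul_le_mul_of_nonneg_right ih (Real.rpow_nonneg hb.le _)
      _ ≤ (Real.Gamma ν * ((2*ν + (k:ℝ))/2) ^ ((k:ℝ)/2)) * ((2*ν + (k:ℝ))/2) ^ (1/2:ℝ) := by
          have h1 : ((2*ν + (k:ℝ) - 1)/2) ^ ((k:ℝ)/2) ≤ ((2*ν + (k:ℝ))/2) ^ ((k:ℝ)/2) :=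
            Real.rpow_le_rpow hbase0 hbase1 (by positivity)
          have h2 : (ν + (k:ℝ)/2) ^ (1/2:ℝ) = ((2*ν + (k:ℝ))/2) ^ (1/2:ℝ) := by
            congr 1; ring
          rw [h2]
          exact mul_le_mul_of_nonneg_right
            (mul_le_mul_of_nonneg_left h1 hΓν.le) (Real.rpow_nonneg (by linarith) _)
      _ = Real.Gamma ν * ((2*ν + ((k:ℕ)+1:ℕ) - 1)/2) ^ ((((k:ℕ)+1:ℕ):ℝ)/2) := by
          rw [mul_assoc, ← Real.rpow_add (by linarith : (0:ℝ) < (2*ν + (k:ℝ))/2)]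
          push_cast
          ring_nf

/-- For an integer `m ≥ 0`, `ν > 1/2`, and `x > 0`,
`x^{ν+m} K_ν(x) ≤ (m² + (2ν−1)m)^{m/2} · 2^{ν−1}Γ(ν)` (for `m = 0` the first factor,
a real power `0 ^ 0`, equals `1`). -/
theorem besselK_weighted_bound (m : ℕ) (ν : ℝ) (hν : 1 / 2 < ν) (x : ℝ) (hx : 0 < x) :
    x ^ (ν + (m : ℝ)) * besselK ν x ≤
      ((m : ℝ) ^ 2 + (2 * ν - 1) * (m : ℝ)) ^ ((m : ℝ) / 2) *
        (2 ^ (ν - 1) * Real.Gamma ν) := by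
  have hν0 : (0:ℝ) < ν := by linarith
  have hνm : (0:ℝ) < ν + (m:ℝ)/2 := by
    have : (0:ℝ) ≤ (m:ℝ) := Nat.cast_nonneg m
    linarith
  rw [weighted_repr m hν hx]
  -- integrability of both integrands
  have hmeasf : AEStronglyMeasurable
      (fun u : ℝ => u ^ (ν-1) * Real.exp (-u) * (x ^ (m:ℝ) * Real.exp (-(x^2/(4*u)))))
      (volume.restrict (Ioi 0)) := by
    apply Measurable.aestronglyMeasurable
    fun_prop
  have hintf : IntegrableOn
      (fun u : ℝ => u ^ (ν-1) * Real.exp (-u) * (x ^ (m:ℝ) * Real.exp (-(x^2/(4*u))))) (Ioi 0) := by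
    refine Integrable.mono'
      (g := fun u : ℝ => x ^ (m:ℝ) * (Real.exp (-u) * u ^ (ν-1)))
      ((Real.GammaIntegral_convergent hν0).const_mul _) hmeasf
      ((ae_restrict_mem measurableSet_Ioi).mono fun u hu => ?_)
    have hu : (0:ℝ) < u := hu
    have h1 : (0:ℝ) ≤ u ^ (ν-1) := Real.rpow_nonneg hu.le _
    rw [Real.norm_eq_abs, abs_of_nonneg (by positivity)]
    have h2 : Real.exp (-(x^2/(4*u))) ≤ 1 := by
      rw [Real.exp_le_one_iff]
      have : (0:ℝ) ≤ x^2/(4*u) := by positivity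
      linarith
    calc u ^ (ν-1) * Real.exp (-u) * (x ^ (m:ℝ) * Real.exp (-(x^2/(4*u))))
        ≤ u ^ (ν-1) * Real.exp (-u) * (x ^ (m:ℝ) * 1) := by
          apply mul_le_mul_of_nonneg_left _ (by positivity)
          exact mul_le_mul_of_nonneg_left h2 (by positivity)
      _ = x ^ (m:ℝ) * (Real.exp (-u) * u ^ (ν-1)) := by ring
  have hintg : IntegrableOn
      (fun u : ℝ => u ^ (ν-1) * Real.exp (-u) * ((2*(m:ℝ)) ^ ((m:ℝ)/2) * u ^ ((m:ℝ)/2))) (Ioi 0) := by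
    refine IntegrableOn.congr_fun
      (((Real.GammaIntegral_convergent hνm).const_mul ((2*(m:ℝ)) ^ ((m:ℝ)/2)))) (fun u hu => ?_)
      measurableSet_Ioi
    have hu : (0:ℝ) < u := hu
    rw [show ν + (m:ℝ)/2 - 1 = (ν - 1) + (m:ℝ)/2 by ring, Real.rpow_add hu]
    ring
  have hmono : ∫ u in Ioi (0:ℝ), u ^ (ν-1) * Real.exp (-u) * (x ^ (m:ℝ) * Real.exp (-(x^2/(4*u))))
      ≤ ∫ u in Ioi (0:ℝ), u ^ (ν-1) * Real.exp (-u) * ((2*(m:ℝ)) ^ ((m:ℝ)/2) * u ^ ((m:ℝ)/2)) := by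
    refine setIntegral_mono_on hintf hintg measurableSet_Ioi fun u hu => ?_
    have hu : (0:ℝ) < u := hu
    exact mul_le_mul_of_nonneg_left (pointwise_bound m hx hu) (by positivity)
  have hval : ∫ u in Ioi (0:ℝ), u ^ (ν-1) * Real.exp (-u) * ((2*(m:ℝ)) ^ ((m:ℝ)/2) * u ^ ((m:ℝ)/2))
      = (2*(m:ℝ)) ^ ((m:ℝ)/2) * Real.Gamma (ν + (m:ℝ)/2) := by
    rw [show Real.Gamma (ν + (m:ℝ)/2)
        = ∫ u in Ioi (0:ℝ), Real.exp (-u) * u ^ (ν + (m:ℝ)/2 - 1) from Real.Gamma_eq_integral hνm,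
      ← integral_const_mul]
    refine setIntegral_congr_fun measurableSet_Ioi fun u hu => ?_
    have hu : (0:ℝ) < u := hu
    rw [show ν + (m:ℝ)/2 - 1 = (ν - 1) + (m:ℝ)/2 by ring, Real.rpow_add hu]
    ring
  have h2pos : (0:ℝ) < 2 ^ (ν-1) := Real.rpow_pos_of_pos two_pos _
  have hconst : (0:ℝ) ≤ (2*(m:ℝ)) ^ ((m:ℝ)/2) := Real.rpow_nonneg (by positivity) _
  calc 2 ^ (ν-1) * ∫ u in Ioi (0:ℝ),
          u ^ (ν-1) * Real.exp (-u) * (x ^ (m:ℝ) * Real.exp (-(x^2/(4*u))))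
      ≤ 2 ^ (ν-1) * ((2*(m:ℝ)) ^ ((m:ℝ)/2) * Real.Gamma (ν + (m:ℝ)/2)) := by
        rw [← hval]
        exact mul_le_mul_of_nonneg_left hmono h2pos.le
    _ ≤ 2 ^ (ν-1) * ((2*(m:ℝ)) ^ ((m:ℝ)/2) *
          (Real.Gamma ν * ((2*ν + (m:ℝ) - 1)/2) ^ ((m:ℝ)/2))) := by
        refine mul_le_mul_of_nonneg_left (mul_le_mul_of_nonneg_left ?_ hconst) h2pos.le
        exact Gamma_le_bound hν m
    _ = ((m : ℝ) ^ 2 + (2 * ν - 1) * (m : ℝ)) ^ ((m : ℝ) / 2) * (2 ^ (ν - 1) * Real.Gamma ν) := by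
        rw [show ((2*(m:ℝ)) ^ ((m:ℝ)/2) * (Real.Gamma ν * ((2*ν + (m:ℝ) - 1)/2) ^ ((m:ℝ)/2)))
            = ((2*(m:ℝ)) ^ ((m:ℝ)/2) * ((2*ν + (m:ℝ) - 1)/2) ^ ((m:ℝ)/2)) * Real.Gamma ν by ring,
          ← Real.mul_rpow (by positivity) (by
            have : (0:ℝ) ≤ (m:ℝ) := Nat.cast_nonneg m
            linarith),
          show (2*(m:ℝ)) * ((2*ν + (m:ℝ) - 1)/2) = (m:ℝ)^2 + (2*ν-1)*(m:ℝ) by ring]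
        ring
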